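/- arXiv:1709.06559 — 3 statements merged into one kernel-verified Lean document; each statement's English description precedes it below -/
import Mathlib

section
/- Let (L,·) be a loop, A(L) a subgroup of its automorphism group, and H(L) the A(L)-holomorph of (L,·). If H(L) is an Osborn loop, then for every x ∈ L and all φ ∈ A(L): the bijections y ↦ (y/x)·φ⁻¹(x), y ↦ x·(((x\y)/x)·φ⁻¹(x)) and y ↦ y·(x^λ·φ⁻¹(x)) are ρ-regular; moreover there exists a ρ-regular bijection U with y·φ⁻¹(x) = U(y·x) for all y ∈ L, and a ρ-regular bijection V with x·(y·φ⁻¹(x)) = V(x·(y·x)) for all y ∈ L. -/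
/-- A loop: a set with multiplication, left and right division, and a
two-sided identity element, such that all translations are bijections
(expressed via the division operations). -/
structure Loop (L : Type*) where
  mul : L → L → L
  ldiv : L → L → L
  rdiv : L → L → L
  e : L
  mul_ldiv : ∀ x y, mul x (ldiv x y) = y
  ldiv_mul : ∀ x y, ldiv x (mul x y) = y
  rdiv_mul : ∀ x y, mul (rdiv y x) x = y
  mul_rdiv : ∀ x y, rdiv (mul y x) x = y
  e_mul : ∀ x, mul e x = x
  mul_e : ∀ x, mul x e = x

namespace Loop

variable {L : Type*} (Q : Loop L)

/-- The left inverse `x^λ`, the unique element with `x^λ · x = e`. -/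
def linv (x : L) : L := Q.rdiv Q.e x

/-- The right inverse `x^ρ`, the unique element with `x · x^ρ = e`. -/
def rinv (x : L) : L := Q.ldiv x Q.e

/-- A loop is Osborn if `x·((y·z)·x) = (x·((y·x^λ)·x))·(z·x)` for all `x,y,z`. -/
def IsOsborn : Prop :=
  ∀ x y z, Q.mul x (Q.mul (Q.mul y z) x) =
    Q.mul (Q.mul x (Q.mul (Q.mul y (Q.linv x)) x)) (Q.mul z x)

/-- The automorphism group of a loop, as a subgroup of the permutation group. -/
def autGroup : Subgroup (Equiv.Perm L) where
  carrier := {α | ∀ x y, α (Q.mul x y) = Q.mul (α x) (α y)}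
  one_mem' := fun _ _ => rfl
  mul_mem' := by
    intro α β ha hb x y
    simp only [Equiv.Perm.mul_apply]
    rw [hb x y, ha]
  inv_mem' := by
    intro α ha x y
    apply α.injective
    rw [ha]
    simp

theorem mem_autGroup_iff {α : Equiv.Perm L} :
    α ∈ Q.autGroup ↔ ∀ x y, α (Q.mul x y) = Q.mul (α x) (α y) := Iff.rfl

theorem aut_fix_e {α : Equiv.Perm L} (hα : α ∈ Q.autGroup) : α Q.e = Q.e := by
  have h1 : α (Q.mul Q.e Q.e) = Q.mul (α Q.e) (α Q.e) := hα Q.e Q.e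
  rw [Q.mul_e] at h1
  have h2 : Q.mul (α Q.e) (α Q.e) = Q.mul (α Q.e) Q.e := by rw [Q.mul_e, ← h1]
  have h3 := congrArg (Q.ldiv (α Q.e)) h2
  rwa [Q.ldiv_mul, Q.ldiv_mul] at h3

/-- The `A`-holomorph of a loop `(L,·)`: the loop on `A × L` with multiplication
`(α,x)∘(β,y) = (α∘β, β(x)·y)`, where `A` is a subgroup of the automorphism group. -/
def Holomorph (A : Subgroup (Equiv.Perm L)) (hA : A ≤ Q.autGroup) : Loop (A × L) where
  mul p q := (p.1 * q.1, Q.mul ((q.1 : Equiv.Perm L) p.2) q.2)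
  ldiv p r := (p.1⁻¹ * r.1, Q.ldiv (((p.1⁻¹ * r.1 : A) : Equiv.Perm L) p.2) r.2)
  rdiv r q := (r.1 * q.1⁻¹, ((q.1⁻¹ : A) : Equiv.Perm L) (Q.rdiv r.2 q.2))
  e := (1, Q.e)
  mul_ldiv p r := by
    refine Prod.ext ?_ ?_
    · simp
    · simp [Q.mul_ldiv]
  ldiv_mul p q := by
    refine Prod.ext ?_ ?_
    · simp
    · simp [inv_mul_cancel_left, Q.ldiv_mul]
  rdiv_mul r q := by
    refine Prod.ext ?_ ?_
    · simp
    · simp [Q.rdiv_mul]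
  mul_rdiv p q := by
    refine Prod.ext ?_ ?_
    · simp
    · simp [Q.mul_rdiv]
  e_mul p := by
    refine Prod.ext ?_ ?_
    · simp
    · simp [Q.aut_fix_e (hA p.1.2), Q.e_mul]
  mul_e p := by
    refine Prod.ext ?_ ?_
    · simp
    · simp [Q.mul_e]

/-- A triple `(A,B,C)` of bijections of `L` is an autotopism of `(L,·)` if
`A(x)·B(y) = C(x·y)` for all `x, y`. -/
def IsAutotopism (A B C : L → L) : Prop :=
  Function.Bijective A ∧ Function.Bijective B ∧ Function.Bijective C ∧
    ∀ x y, Q.mul (A x) (B y) = C (Q.mul x y)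

/-- A bijection `U` is ρ-regular if `(I,U,U)` is an autotopism. -/
def IsRhoRegular (U : L → L) : Prop := Q.IsAutotopism id U U

/-- A bijection `U` is λ-regular if `(U,I,U)` is an autotopism. -/
def IsLambdaRegular (U : L → L) : Prop := Q.IsAutotopism U id U

/-- `U'` is an adjoint of the bijection `U` if `(U, U'⁻¹, I)` is an autotopism. -/
def IsMuAdjoint (U U' : L → L) : Prop :=
  letI : Nonempty L := ⟨Q.e⟩
  Function.Bijective U' ∧ Q.IsAutotopism U (Function.invFun U') id

/-- `U` is μ-regular if it has an adjoint, i.e. `(U, U'⁻¹, I)` is an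
autotopism for some bijection `U'`. The μ-regular bijections form `Φ(L,·)`. -/
def IsMuRegular (U : L → L) : Prop := ∃ U', Q.IsMuAdjoint U U'

/-- `U'` belongs to `Ψ(L,·)`, the group of adjoints of μ-regular bijections. -/
def IsPsi (U' : L → L) : Prop := ∃ U, Q.IsMuAdjoint U U'

/-- Membership in the left nucleus `N_λ`. -/
def InNlambda (a : L) : Prop := ∀ y z, Q.mul a (Q.mul y z) = Q.mul (Q.mul a y) z

/-- Membership in the middle nucleus `N_μ`. -/
def InNmu (a : L) : Prop := ∀ y z, Q.mul (Q.mul y a) z = Q.mul y (Q.mul a z)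

/-- Membership in the right nucleus `N_ρ`. -/
def InNrho (a : L) : Prop := ∀ y z, Q.mul (Q.mul y z) a = Q.mul y (Q.mul z a)

/-- Membership in the nucleus `N = N_λ ∩ N_μ ∩ N_ρ`. -/
def InNucleus (a : L) : Prop := Q.InNlambda a ∧ Q.InNmu a ∧ Q.InNrho a

/-- Membership in the center `Z = N ∩ C`. -/
def InCenter (a : L) : Prop := Q.InNucleus a ∧ ∀ x, Q.mul a x = Q.mul x a

end Loop

namespace Loop

variable {L : Type*} (Q : Loop L)

theorem aut_linv' {α : Equiv.Perm L} (hα : α ∈ Q.autGroup) (a : L) :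
    α (Q.linv a) = Q.linv (α a) := by
  have h0 : Q.mul (Q.linv a) a = Q.e := Q.rdiv_mul a Q.e
  have h1 : Q.mul (α (Q.linv a)) (α a) = Q.e := by
    rw [← hα, h0, Q.aut_fix_e hα]
  calc α (Q.linv a) = Q.rdiv (Q.mul (α (Q.linv a)) (α a)) (α a) := (Q.mul_rdiv _ _).symm
    _ = Q.rdiv Q.e (α a) := by rw [h1]
    _ = Q.linv (α a) := rfl

/-- The key identity extracted from the second coordinate of the Osborn law in the
holomorph: `x·((y·z)·φ⁻¹(x)) = (x·((y·xᵏ)·x))·(z·φ⁻¹(x))`. -/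
theorem holo_key (A : Subgroup (Equiv.Perm L)) (hA : A ≤ Q.autGroup)
    (h : (Q.Holomorph A hA).IsOsborn) (φ : A) (x y z : L) :
    Q.mul x (Q.mul (Q.mul y z) (((φ⁻¹ : A) : Equiv.Perm L) x)) =
      Q.mul (Q.mul x (Q.mul (Q.mul y (Q.linv x)) x))
        (Q.mul z (((φ⁻¹ : A) : Equiv.Perm L) x)) := by
  set ψ : Equiv.Perm L := ((φ : A) : Equiv.Perm L) with hψ
  have hφ : ∀ a b, ψ (Q.mul a b) = Q.mul (ψ a) (ψ b) := hA φ.2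
  set c : L := ((φ⁻¹ : A) : Equiv.Perm L) x with hc
  have hxc : ψ c = x := by
    simp [hc, hψ]
  have h2 := congrArg Prod.snd
    (h ((φ : A), c) ((1 : A), ψ⁻¹ y) ((1 : A), ψ⁻¹ z))
  simp only [Loop.Holomorph, Loop.linv, Loop.IsOsborn, Subgroup.coe_mul,
    OneMemClass.coe_one, InvMemClass.coe_inv, Equiv.Perm.mul_apply,
    Equiv.Perm.one_apply, one_mul, mul_one, Equiv.Perm.inv_def, Equiv.apply_symm_apply,
    Equiv.symm_apply_apply] at h2
  have hlinv : Q.rdiv Q.e c = Q.linv c := rfl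
  have hlinv2 : ∀ a, ψ (Q.linv a) = Q.linv (ψ a) := Q.aut_linv' (hA φ.2)
  rw [← hψ] at h2
  simp only [hφ, Equiv.Perm.inv_def, Equiv.apply_symm_apply, hlinv, hlinv2, hxc] at h2
  exact h2

end Loop

/-- If `H(L)` is an Osborn loop, then for every `x ∈ L` and all
`φ ∈ A(L)`: the bijections `y ↦ (y/x)·φ⁻¹(x)`, `y ↦ x·(((x\y)/x)·φ⁻¹(x))` and
`y ↦ y·(x^λ·φ⁻¹(x))` are ρ-regular; moreover there exists a ρ-regular bijection
`U` with `y·φ⁻¹(x) = U(y·x)` for all `y`, and a ρ-regular bijection `V` with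
`x·(y·φ⁻¹(x)) = V(x·(y·x))` for all `y`. -/
theorem holomorph_osborn_rho_regular {L : Type*} (Q : Loop L)
    (A : Subgroup (Equiv.Perm L)) (hA : A ≤ Q.autGroup) :
    (Q.Holomorph A hA).IsOsborn →
      ∀ (x : L) (φ : A),
        Q.IsRhoRegular (fun y => Q.mul (Q.rdiv y x) (((φ⁻¹ : A) : Equiv.Perm L) x)) ∧
        Q.IsRhoRegular (fun y => Q.mul x (Q.mul (Q.rdiv (Q.ldiv x y) x) (((φ⁻¹ : A) : Equiv.Perm L) x))) ∧
        Q.IsRhoRegular (fun y => Q.mul y (Q.mul (Q.linv x) (((φ⁻¹ : A) : Equiv.Perm L) x))) ∧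
        (∃ U : L → L, Q.IsRhoRegular U ∧ ∀ y, Q.mul y (((φ⁻¹ : A) : Equiv.Perm L) x) = U (Q.mul y x)) ∧
        (∃ V : L → L, Q.IsRhoRegular V ∧
          ∀ y, Q.mul x (Q.mul y (((φ⁻¹ : A) : Equiv.Perm L) x)) = V (Q.mul x (Q.mul y x))) := by
  intro hO x φ
  set c : L := ((φ⁻¹ : A) : Equiv.Perm L) x with hc
  have hS : ∀ y z, Q.mul x (Q.mul (Q.mul y z) c) =
      Q.mul (Q.mul x (Q.mul (Q.mul y (Q.linv x)) x)) (Q.mul z c) :=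
    fun y z => Q.holo_key A hA hO φ x y z
  have hO1 : ∀ y z, Q.mul x (Q.mul (Q.mul y z) x) =
      Q.mul (Q.mul x (Q.mul (Q.mul y (Q.linv x)) x)) (Q.mul z x) := by
    have h := fun y z => Q.holo_key A hA hO 1 x y z
    simpa using h
  set u1 : L → L := fun b => Q.mul (Q.rdiv b x) c with hu1
  have hM : ∀ s t, Q.mul s (Q.mul t c) =
      Q.mul x (Q.mul (Q.rdiv (Q.ldiv x (Q.mul s (Q.mul t x))) x) c) := by
    intro s t
    set y := Q.rdiv (Q.rdiv (Q.ldiv x s) x) (Q.linv x) with hy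
    have hE : Q.mul x (Q.mul (Q.mul y (Q.linv x)) x) = s := by
      rw [hy, Q.rdiv_mul, Q.rdiv_mul, Q.mul_ldiv]
    have h1 : Q.mul x (Q.mul (Q.mul y t) x) = Q.mul s (Q.mul t x) := by
      rw [hO1 y t, hE]
    have h2 : Q.mul y t = Q.rdiv (Q.ldiv x (Q.mul s (Q.mul t x))) x := by
      rw [← h1, Q.ldiv_mul, Q.mul_rdiv]
    have h3 := hS y t
    rw [hE, h2] at h3
    exact h3.symm
  have hM0 : ∀ b, Q.mul x (Q.mul (Q.rdiv (Q.ldiv x b) x) c) = u1 b := by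
    intro b
    have h := hM Q.e (Q.rdiv b x)
    rw [Q.rdiv_mul, Q.e_mul, Q.e_mul] at h
    exact h.symm
  have hreg : ∀ a b, Q.mul a (u1 b) = u1 (Q.mul a b) := by
    intro a b
    have h1 := hM a (Q.rdiv b x)
    rw [Q.rdiv_mul] at h1
    rw [hM0 (Q.mul a b)] at h1
    exact h1
  have hbij : Function.Bijective u1 := by
    apply Function.bijective_iff_has_inverse.mpr
    refine ⟨fun w => Q.mul (Q.rdiv w c) x, ?_, ?_⟩
    · intro b; simp only [hu1]; rw [Q.mul_rdiv, Q.rdiv_mul]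
    · intro w; simp only [hu1]; rw [Q.mul_rdiv, Q.rdiv_mul]
  have hrho : Q.IsRhoRegular u1 := ⟨Function.bijective_id, hbij, hbij, hreg⟩
  have hUx : ∀ yy, Q.mul yy c = u1 (Q.mul yy x) := by
    intro yy
    simp only [hu1]
    rw [Q.mul_rdiv]
  refine ⟨?_, ?_, ?_, ⟨u1, hrho, hUx⟩, ⟨u1, hrho, ?_⟩⟩
  · exact hrho
  · have he : (fun yy => Q.mul x (Q.mul (Q.rdiv (Q.ldiv x yy) x) c)) = u1 := funext hM0
    rw [he]; exact hrho
  · have he : (fun yy => Q.mul yy (Q.mul (Q.linv x) c)) = u1 := by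
      funext yy
      have h := hreg yy Q.e
      rw [Q.mul_e] at h
      exact h
    rw [he]; exact hrho
  · intro yy
    rw [hUx yy]
    exact hreg x (Q.mul yy x)
end

section
/- Let (L,·) be a loop, A(L) a subgroup of its automorphism group, and H(L) the A(L)-holomorph of (L,·). If H(L) is an Osborn loop, then for every x ∈ L and all α, φ ∈ A(L): the right translations R_a : y ↦ y·a are μ-regular and the left translations L_a : y ↦ a·y belong to the adjoint group Ψ(L,·), both for a = α(x)·x^ρ and for a = x^λ·φ⁻¹(x). -/
namespace Loop

variable {L : Type*} (Q : Loop L)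

theorem mul_left_cancel' {c u v : L} (h : Q.mul c u = Q.mul c v) : u = v := by
  have := congrArg (Q.ldiv c) h
  rwa [Q.ldiv_mul, Q.ldiv_mul] at this

theorem linv_mul' (x : L) : Q.mul (Q.linv x) x = Q.e := Q.rdiv_mul x Q.e

theorem mul_rinv' (x : L) : Q.mul x (Q.rinv x) = Q.e := Q.mul_ldiv x Q.e

theorem rinv_linv' (x : L) : Q.rinv (Q.linv x) = x := by
  have h : Q.mul (Q.linv x) x = Q.e := Q.linv_mul' x
  show Q.ldiv (Q.linv x) Q.e = x
  rw [← h, Q.ldiv_mul]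

theorem aut_rinv' {α : Equiv.Perm L} (hα : α ∈ Q.autGroup) (x : L) :
    α (Q.rinv x) = Q.rinv (α x) := by
  have h : Q.mul (α x) (α (Q.rinv x)) = Q.e := by
    rw [← hα x (Q.rinv x), Q.mul_rinv', Q.aut_fix_e hα]
  have : Q.rinv (α x) = Q.ldiv (α x) Q.e := rfl
  rw [this, ← h, Q.ldiv_mul]

theorem key_ident (A : Subgroup (Equiv.Perm L)) (hA : A ≤ Q.autGroup)
    (hO : (Q.Holomorph A hA).IsOsborn) (β : A) (x y z : L) :
    Q.mul ((β : Equiv.Perm L) x) (Q.mul (Q.mul y z) x) =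
      Q.mul (Q.mul ((β : Equiv.Perm L) x) (Q.mul (Q.mul y (Q.linv x)) x)) (Q.mul z x) := by
  have h := congrArg Prod.snd (hO ((1 : A), x) (β, y) ((1 : A), z))
  simp only [Loop.Holomorph, Loop.linv, Loop.rdiv] at h
  simpa [Loop.linv] using h

/-- Step A: `(β(x)·w)·v = β(x)·(x\((x·w)·v))`. -/
theorem key_step_A (A : Subgroup (Equiv.Perm L)) (hA : A ≤ Q.autGroup)
    (hO : (Q.Holomorph A hA).IsOsborn) (β : A) (x w v : L) :
    Q.mul (Q.mul ((β : Equiv.Perm L) x) w) v =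
      Q.mul ((β : Equiv.Perm L) x) (Q.ldiv x (Q.mul (Q.mul x w) v)) := by
  set y := Q.rdiv (Q.rdiv w x) (Q.linv x) with hy
  set z := Q.rdiv v x with hz
  have hT : Q.mul (Q.mul y (Q.linv x)) x = w := by
    rw [hy, Q.rdiv_mul, Q.rdiv_mul]
  have hzx : Q.mul z x = v := Q.rdiv_mul x v
  have S1 := Q.key_ident A hA hO 1 x y z
  simp only [OneMemClass.coe_one, Equiv.Perm.coe_one, id_eq] at S1
  rw [hT, hzx] at S1
  have S2 := Q.key_ident A hA hO β x y z
  rw [hT, hzx] at S2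
  have h3 : Q.mul (Q.mul y z) x = Q.ldiv x (Q.mul (Q.mul x w) v) := by
    rw [← S1, Q.ldiv_mul]
  rw [← h3, ← S2]

/-- `a = β(x)·x^ρ` is in the left nucleus. -/
theorem key_nlambda (A : Subgroup (Equiv.Perm L)) (hA : A ≤ Q.autGroup)
    (hO : (Q.Holomorph A hA).IsOsborn) (β : A) (x : L) :
    Q.InNlambda (Q.mul ((β : Equiv.Perm L) x) (Q.rinv x)) := by
  set b := (β : Equiv.Perm L) x with hb
  have hL : ∀ v, Q.mul (Q.mul b (Q.rinv x)) v = Q.mul b (Q.ldiv x v) := by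
    intro v
    rw [Q.key_step_A A hA hO β x (Q.rinv x) v, Q.mul_rinv', Q.e_mul]
  intro u v
  rw [hL (Q.mul u v)]
  have h1 : Q.mul (Q.mul (Q.mul b (Q.rinv x)) u) v
      = Q.mul (Q.mul b (Q.ldiv x u)) v := by rw [hL u]
  rw [h1, Q.key_step_A A hA hO β x (Q.ldiv x u) v, Q.mul_ldiv]

/-- `a = β(x)·x^ρ` is in the middle nucleus. -/
theorem key_nmu (A : Subgroup (Equiv.Perm L)) (hA : A ≤ Q.autGroup)
    (hO : (Q.Holomorph A hA).IsOsborn) (β : A) (x : L) :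
    Q.InNmu (Q.mul ((β : Equiv.Perm L) x) (Q.rinv x)) := by
  set a := Q.mul ((β : Equiv.Perm L) x) (Q.rinv x) with ha
  have hNl : Q.InNlambda a := Q.key_nlambda A hA hO β x
  intro t v
  -- Osborn identity of Q (β = 1 case of key_ident) at x := t, y := a, z := v/t
  have S1 := Q.key_ident A hA hO 1 t a (Q.rdiv v t)
  simp only [OneMemClass.coe_one, Equiv.Perm.coe_one, id_eq] at S1
  have h1 : Q.mul (Q.mul a (Q.linv t)) t = a := by
    rw [← hNl (Q.linv t) t, Q.linv_mul', Q.mul_e]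
  have h2 : Q.mul (Q.rdiv v t) t = v := Q.rdiv_mul t v
  rw [h1, h2] at S1
  have h3 : Q.mul a (Q.mul (Q.rdiv v t) t) = Q.mul (Q.mul a (Q.rdiv v t)) t :=
    hNl (Q.rdiv v t) t
  rw [h2] at h3
  rw [← S1, ← h3]

/-- From middle-nucleus membership, the right translation is μ-regular
with adjoint the left translation. -/
theorem muAdjoint_of_nmu {a : L} (ha : Q.InNmu a) :
    Q.IsMuAdjoint (fun y => Q.mul y a) (fun y => Q.mul a y) := by
  haveI : Nonempty L := ⟨Q.e⟩
  have hR : Function.Bijective (fun y => Q.mul y a) := by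
    constructor
    · intro u v h
      have := congrArg (fun t => Q.rdiv t a) h
      simpa [Q.mul_rdiv] using this
    · intro v; exact ⟨Q.rdiv v a, Q.rdiv_mul a v⟩
  have hL : Function.Bijective (fun y => Q.mul a y) := by
    constructor
    · intro u v h
      have := congrArg (Q.ldiv a) h
      simpa [Q.ldiv_mul] using this
    · intro v; exact ⟨Q.ldiv a v, Q.mul_ldiv a v⟩
  have hinv : ∀ v, Function.invFun (fun y => Q.mul a y) v = Q.ldiv a v := by
    intro v
    have h1 := Function.leftInverse_invFun hL.injective (Q.ldiv a v)
    simpa [Q.mul_ldiv] using h1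
  refine ⟨hL, hR, ?_, Function.bijective_id, ?_⟩
  · rw [show Function.invFun (fun y => Q.mul a y) = fun v => Q.ldiv a v from funext hinv]
    constructor
    · intro u v h
      have h2 : Q.mul a (Q.ldiv a u) = Q.mul a (Q.ldiv a v) := congrArg (Q.mul a) h
      rwa [Q.mul_ldiv, Q.mul_ldiv] at h2
    · intro v; exact ⟨Q.mul a v, Q.ldiv_mul a v⟩
  · intro u v
    rw [hinv v]
    show Q.mul (Q.mul u a) (Q.ldiv a v) = Q.mul u v
    rw [ha u (Q.ldiv a v), Q.mul_ldiv]

end Loop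

/-- If `H(L)` is an Osborn loop, then for every `x ∈ L` and all
`α, φ ∈ A(L)`: the right translations `R_a : y ↦ y·a` are μ-regular and the left
translations `L_a : y ↦ a·y` belong to the adjoint group `Ψ(L,·)`, both for
`a = α(x)·x^ρ` and for `a = x^λ·φ⁻¹(x)`. -/
theorem holomorph_osborn_mu_regular {L : Type*} (Q : Loop L)
    (A : Subgroup (Equiv.Perm L)) (hA : A ≤ Q.autGroup) :
    (Q.Holomorph A hA).IsOsborn →
      ∀ (x : L) (α φ : A),
        Q.IsMuRegular (fun y => Q.mul y (Q.mul ((α : Equiv.Perm L) x) (Q.rinv x))) ∧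
        Q.IsPsi (fun y => Q.mul (Q.mul ((α : Equiv.Perm L) x) (Q.rinv x)) y) ∧
        Q.IsMuRegular (fun y => Q.mul y (Q.mul (Q.linv x) (((φ⁻¹ : A) : Equiv.Perm L) x))) ∧
        Q.IsPsi (fun y => Q.mul (Q.mul (Q.linv x) (((φ⁻¹ : A) : Equiv.Perm L) x)) y) := by
  intro hO x α φ
  have ha : Q.InNmu (Q.mul ((α : Equiv.Perm L) x) (Q.rinv x)) := Q.key_nmu A hA hO α x
  -- rewrite b = x^λ·φ⁻¹(x) as φ(u)·u^ρ with u = φ⁻¹(x^λ)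
  set u : L := ((φ⁻¹ : A) : Equiv.Perm L) (Q.linv x) with hu
  have hfu : ((φ : A) : Equiv.Perm L) u = Q.linv x := by
    simp [hu]
  have hru : Q.rinv u = ((φ⁻¹ : A) : Equiv.Perm L) x := by
    rw [hu, ← Q.aut_rinv' (hA (φ⁻¹ : A).2) (Q.linv x), Q.rinv_linv']
  have hbeq : Q.mul (Q.linv x) (((φ⁻¹ : A) : Equiv.Perm L) x)
      = Q.mul (((φ : A) : Equiv.Perm L) u) (Q.rinv u) := by rw [hfu, hru]
  have hb : Q.InNmu (Q.mul (Q.linv x) (((φ⁻¹ : A) : Equiv.Perm L) x)) := by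
    rw [hbeq]; exact Q.key_nmu A hA hO φ u
  exact ⟨⟨_, Q.muAdjoint_of_nmu ha⟩, ⟨_, Q.muAdjoint_of_nmu ha⟩,
    ⟨_, Q.muAdjoint_of_nmu hb⟩, ⟨_, Q.muAdjoint_of_nmu hb⟩⟩
end

section
/- Let (L,·) be a loop, A(L) a subgroup of its automorphism group, and H(L) the A(L)-holomorph of (L,·). If H(L) is an Osborn loop, then for all x, y ∈ L and all φ ∈ A(L): (y/x)·φ⁻¹(x) = y·(x^λ·φ⁻¹(x)) = x·(((x\y)/x)·φ⁻¹(x)), and moreover x^λ·φ⁻¹(x) = x·((x^ρ/x)·φ⁻¹(x)). -/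
namespace Loop

variable {L : Type*} (Q : Loop L)

theorem rcancel {p q x : L} (h : Q.mul p x = Q.mul q x) : p = q := by
  have h2 := congrArg (fun t => Q.rdiv t x) h
  simpa [Q.mul_rdiv] using h2

theorem aut_linv'_s17 {σ : Equiv.Perm L} (hσ : σ ∈ Q.autGroup) (x : L) :
    σ (Q.linv x) = Q.linv (σ x) := by
  have hσ' : ∀ u v, σ (Q.mul u v) = Q.mul (σ u) (σ v) := hσ
  have h1 : Q.mul (σ (Q.linv x)) (σ x) = Q.e := by
    rw [← hσ']
    show σ (Q.mul (Q.rdiv Q.e x) x) = Q.e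
    rw [Q.rdiv_mul, Q.aut_fix_e hσ]
  have h2 := Q.mul_rdiv (σ x) (σ (Q.linv x))
  rw [h1] at h2
  exact h2.symm

theorem keyE (A : Subgroup (Equiv.Perm L)) (hA : A ≤ Q.autGroup)
    (h : (Q.Holomorph A hA).IsOsborn) (α β γ : A) (x y z : L) :
    Q.mul ((β : Equiv.Perm L) ((γ : Equiv.Perm L) ((α : Equiv.Perm L) x)))
      (Q.mul ((α : Equiv.Perm L) (Q.mul ((γ : Equiv.Perm L) y) z)) x)
    = Q.mul ((γ : Equiv.Perm L) ((α : Equiv.Perm L)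
        (Q.mul ((β : Equiv.Perm L) x) (Q.mul (Q.mul y (Q.linv x)) x))))
      (Q.mul ((α : Equiv.Perm L) z) x) := by
  have hα : ∀ u v, (α : Equiv.Perm L) (Q.mul u v)
      = Q.mul ((α : Equiv.Perm L) u) ((α : Equiv.Perm L) v) := hA α.2
  have H := congrArg Prod.snd (h (α, x) (β, y) (γ, z))
  simp only [Holomorph, linv, IsOsborn, Subgroup.coe_mul, InvMemClass.coe_inv,
    OneMemClass.coe_one, Equiv.Perm.mul_apply, Equiv.Perm.one_apply, one_mul, mul_one,
    Equiv.Perm.inv_def, Equiv.symm_apply_apply, Equiv.apply_symm_apply, hα] at H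
  simpa [linv, hα] using H

end Loop

/-- If `H(L)` is an Osborn loop, then for all `x, y ∈ L` and all
`φ ∈ A(L)`: `(y/x)·φ⁻¹(x) = y·(x^λ·φ⁻¹(x)) = x·(((x\y)/x)·φ⁻¹(x))` and
`x^λ·φ⁻¹(x) = x·((x^ρ/x)·φ⁻¹(x))`. -/
theorem holomorph_osborn_right_translation_eq {L : Type*} (Q : Loop L)
    (A : Subgroup (Equiv.Perm L)) (hA : A ≤ Q.autGroup) :
    (Q.Holomorph A hA).IsOsborn →
      ∀ (x y : L) (φ : A),
        Q.mul (Q.rdiv y x) (((φ⁻¹ : A) : Equiv.Perm L) x) = Q.mul y (Q.mul (Q.linv x) (((φ⁻¹ : A) : Equiv.Perm L) x)) ∧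
        Q.mul y (Q.mul (Q.linv x) (((φ⁻¹ : A) : Equiv.Perm L) x)) = Q.mul x (Q.mul (Q.rdiv (Q.ldiv x y) x) (((φ⁻¹ : A) : Equiv.Perm L) x)) ∧
        (Q.mul (Q.linv x) (((φ⁻¹ : A) : Equiv.Perm L) x)) = Q.mul x (Q.mul (Q.rdiv (Q.rinv x) x) (((φ⁻¹ : A) : Equiv.Perm L) x)) := by
  intro h x y φ
  have hφ : ∀ u v, (φ : Equiv.Perm L) (Q.mul u v)
      = Q.mul ((φ : Equiv.Perm L) u) ((φ : Equiv.Perm L) v) := hA φ.2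
  set a := ((φ⁻¹ : A) : Equiv.Perm L) x with ha
  have hfa : (φ : Equiv.Perm L) a = x := by
    rw [ha]; simp
  -- F1 : the base loop Osborn identity specialized at z = e
  have F1 : ∀ w, Q.mul x (Q.mul w x)
      = Q.mul (Q.mul x (Q.mul (Q.mul w (Q.linv x)) x)) x := by
    intro w
    have := Q.keyE A hA h 1 1 1 x w Q.e
    simpa [Q.mul_e, Q.e_mul] using this
  have o1 : ∀ w, Q.mul x (Q.mul (Q.mul w (Q.linv x)) x)
      = Q.rdiv (Q.mul x (Q.mul w x)) x := by
    intro w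
    rw [F1 w, Q.mul_rdiv]
  -- U : x·((Y·Z)·a) = (x·((Y·x^λ)·x))·(Z·a)
  have U : ∀ Y Z, Q.mul x (Q.mul (Q.mul Y Z) a)
      = Q.mul (Q.mul x (Q.mul (Q.mul Y (Q.linv x)) x)) (Q.mul Z a) := by
    intro Y Z
    have hk := Q.keyE A hA h 1 1 φ a (((φ⁻¹ : A) : Equiv.Perm L) Y) Z
    simp only [OneMemClass.coe_one, Equiv.Perm.one_apply, InvMemClass.coe_inv,
      Equiv.Perm.inv_def, Equiv.apply_symm_apply, hfa, hφ, Q.aut_linv'_s17 (hA φ.2)] at hk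
    exact hk
  -- W : x·((Y·Z)·a) = (x·((Y·a^λ)·a))·(Z·a)
  have W : ∀ Y Z, Q.mul x (Q.mul (Q.mul Y Z) a)
      = Q.mul (Q.mul x (Q.mul (Q.mul Y (Q.linv a)) a)) (Q.mul Z a) := by
    intro Y Z
    have hk := Q.keyE A hA h 1 φ 1 a Y Z
    simp only [OneMemClass.coe_one, Equiv.Perm.one_apply, hfa] at hk
    exact hk
  -- † : x·((Y·a^λ)·a) = x·((Y·x^λ)·x)
  have dag : ∀ Y, Q.mul x (Q.mul (Q.mul Y (Q.linv a)) a)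
      = Q.mul x (Q.mul (Q.mul Y (Q.linv x)) x) := by
    intro Y
    have hU := U Y Q.e
    have hW := W Y Q.e
    rw [Q.mul_e, Q.e_mul] at hU hW
    exact Q.rcancel (hW.symm.trans hU)
  -- V : x·(Y·a) = ((x·(Y·x))/x)·a
  have V : ∀ Y, Q.mul x (Q.mul Y a)
      = Q.mul (Q.rdiv (Q.mul x (Q.mul Y x)) x) a := by
    intro Y
    have hU := U Y Q.e
    rw [Q.mul_e, Q.e_mul, o1] at hU
    exact hU
  -- claim 1 : u·(x^λ·a) = (u/x)·a
  have claim1 : ∀ u, Q.mul u (Q.mul (Q.linv x) a) = Q.mul (Q.rdiv u x) a := by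
    intro u
    set Y := Q.rdiv (Q.ldiv x (Q.mul u x)) x with hY
    have hYx : Q.mul Y x = Q.ldiv x (Q.mul u x) := Q.rdiv_mul _ _
    have hxYx : Q.mul x (Q.mul Y x) = Q.mul u x := by rw [hYx, Q.mul_ldiv]
    have hu : Q.rdiv (Q.mul x (Q.mul Y x)) x = u := by rw [hxYx, Q.mul_rdiv]
    calc Q.mul u (Q.mul (Q.linv x) a)
        = Q.mul (Q.rdiv (Q.mul x (Q.mul Y x)) x) (Q.mul (Q.linv x) a) := by rw [hu]
      _ = Q.mul (Q.mul x (Q.mul (Q.mul Y (Q.linv x)) x)) (Q.mul (Q.linv x) a) := by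
            rw [o1]
      _ = Q.mul (Q.mul x (Q.mul (Q.mul Y (Q.linv a)) a)) (Q.mul (Q.linv x) a) := by
            rw [dag]
      _ = Q.mul x (Q.mul (Q.mul Y (Q.linv x)) a) := (W Y (Q.linv x)).symm
      _ = Q.mul (Q.rdiv (Q.mul x (Q.mul (Q.mul Y (Q.linv x)) x)) x) a := V _
      _ = Q.mul (Q.rdiv (Q.rdiv (Q.mul x (Q.mul Y x)) x) x) a := by rw [o1]
      _ = Q.mul (Q.rdiv u x) a := by rw [hu]
  -- claim 2 : y·(x^λ·a) = x·(((x\y)/x)·a)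
  have claim2 : ∀ w, Q.mul w (Q.mul (Q.linv x) a)
      = Q.mul x (Q.mul (Q.rdiv (Q.ldiv x w) x) a) := by
    intro w
    have hV := V (Q.rdiv (Q.ldiv x w) x)
    rw [Q.rdiv_mul, Q.mul_ldiv] at hV
    rw [claim1 w, hV]
  refine ⟨(claim1 y).symm, claim2 y, ?_⟩
  have h3 := claim2 Q.e
  rw [Q.e_mul] at h3
  simpa [Loop.rinv] using h3
end
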